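/- arXiv:1407.1004 — 4 statements merged into one kernel-verified Lean document; each statement's English description precedes it below -/
import Mathlib

section
/- For every x ∈ R^n and every index i, the partial derivative ∂φ_i/∂x_i(x) is strictly positive, and for every j ≠ i the partial derivative ∂φ_i/∂x_j(x) is strictly negative. -/
/-- The fixed-point map `φ` for the ML equations of the beta model for `k`-uniform
hypergraphs on `n` nodes: `φ_i(x) = log d_i − log ∑_s e^{x̃_s}/(1 + e^{x̃_s + x_i})`,
the sum over all `(k−1)`-element subsets `s` of `{1,…,n} \ {i}`. -/
noncomputable def phi (n k : ℕ) (d : Fin n → ℝ) (x : Fin n → ℝ) (i : Fin n) : ℝ :=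
  Real.log (d i) -
    Real.log (∑ s ∈ Finset.powersetCard (k - 1) (Finset.univ.erase i),
      Real.exp (∑ j ∈ s, x j) / (1 + Real.exp ((∑ j ∈ s, x j) + x i)))

open Real Finset

/-- The continuous linear map `y ↦ ∑ j ∈ s, y j`. -/
noncomputable def La (n : ℕ) (s : Finset (Fin n)) : (Fin n → ℝ) →L[ℝ] ℝ :=
  ∑ j ∈ s, ContinuousLinearMap.proj j

lemma La_apply_single (n : ℕ) (s : Finset (Fin n)) (j : Fin n) :
    La n s (Pi.single j 1) = if j ∈ s then 1 else 0 := by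
  classical
  simp only [La, ContinuousLinearMap.coe_sum', Finset.sum_apply,
    ContinuousLinearMap.proj_apply, Pi.single_apply]
  simp [eq_comm]

lemma hasFDerivAt_La (n : ℕ) (s : Finset (Fin n)) (x : Fin n → ℝ) :
    HasFDerivAt (fun y : Fin n → ℝ => ∑ j ∈ s, y j) (La n s) x := by
  exact HasFDerivAt.fun_sum fun j _ =>
    (ContinuousLinearMap.proj j : (Fin n → ℝ) →L[ℝ] ℝ).hasFDerivAt

/-- The derivative of a single term of the sum in `phi`. -/
noncomputable def T (n : ℕ) (i : Fin n) (x : Fin n → ℝ) (s : Finset (Fin n)) :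
    (Fin n → ℝ) →L[ℝ] ℝ :=
  Real.exp (∑ j ∈ s, x j) •
      ((-((1 + Real.exp ((∑ j ∈ s, x j) + x i)) ^ 2)⁻¹) •
        (Real.exp ((∑ j ∈ s, x j) + x i) •
          (La n s + ContinuousLinearMap.proj i))) +
    (1 + Real.exp ((∑ j ∈ s, x j) + x i))⁻¹ •
      (Real.exp (∑ j ∈ s, x j) • La n s)

lemma hasFDerivAt_term (n : ℕ) (i : Fin n) (x : Fin n → ℝ) (s : Finset (Fin n)) :
    HasFDerivAt
      (fun y : Fin n → ℝ =>
        Real.exp (∑ j ∈ s, y j) / (1 + Real.exp ((∑ j ∈ s, y j) + y i)))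
      (T n i x s) x := by
  have hA := hasFDerivAt_La n s x
  have hproj : HasFDerivAt (fun y : Fin n → ℝ => y i)
      (ContinuousLinearMap.proj i : (Fin n → ℝ) →L[ℝ] ℝ) x :=
    (ContinuousLinearMap.proj i : (Fin n → ℝ) →L[ℝ] ℝ).hasFDerivAt
  have hB : HasFDerivAt (fun y : Fin n → ℝ => (∑ j ∈ s, y j) + y i)
      (La n s + ContinuousLinearMap.proj i) x := hA.add hproj
  have hden : HasFDerivAt (fun y : Fin n → ℝ => 1 + Real.exp ((∑ j ∈ s, y j) + y i))
      (Real.exp ((∑ j ∈ s, x j) + x i) • (La n s + ContinuousLinearMap.proj i)) x :=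
    hB.exp.const_add 1
  have hDne : (1 + Real.exp ((∑ j ∈ s, x j) + x i)) ≠ 0 := by positivity
  have hinv : HasFDerivAt
      (fun y : Fin n → ℝ => (1 + Real.exp ((∑ j ∈ s, y j) + y i))⁻¹)
      ((-((1 + Real.exp ((∑ j ∈ s, x j) + x i)) ^ 2)⁻¹) •
        (Real.exp ((∑ j ∈ s, x j) + x i) •
          (La n s + ContinuousLinearMap.proj i))) x :=
    (hasDerivAt_inv hDne).comp_hasFDerivAt x hden
  have hnum : HasFDerivAt (fun y : Fin n → ℝ => Real.exp (∑ j ∈ s, y j))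
      (Real.exp (∑ j ∈ s, x j) • La n s) x := hA.exp
  have := hnum.fun_mul hinv
  simpa only [div_eq_mul_inv, T] using this

lemma T_apply_single_self (n : ℕ) (i : Fin n) (x : Fin n → ℝ) (s : Finset (Fin n))
    (his : i ∉ s) :
    T n i x s (Pi.single i 1) =
      -(Real.exp (∑ j ∈ s, x j) * Real.exp ((∑ j ∈ s, x j) + x i) *
        ((1 + Real.exp ((∑ j ∈ s, x j) + x i)) ^ 2)⁻¹) := by
  simp only [T, ContinuousLinearMap.add_apply, ContinuousLinearMap.smul_apply,
    La_apply_single, ContinuousLinearMap.proj_apply, Pi.single_eq_same,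
    if_neg his, smul_eq_mul]
  ring

lemma T_apply_single_ne (n : ℕ) (i j : Fin n) (x : Fin n → ℝ) (s : Finset (Fin n))
    (hij : i ≠ j) :
    T n i x s (Pi.single j 1) =
      if j ∈ s then
        Real.exp (∑ l ∈ s, x l) * ((1 + Real.exp ((∑ l ∈ s, x l) + x i))⁻¹ -
          Real.exp ((∑ l ∈ s, x l) + x i) *
            ((1 + Real.exp ((∑ l ∈ s, x l) + x i)) ^ 2)⁻¹)
      else 0 := by
  simp only [T, ContinuousLinearMap.add_apply, ContinuousLinearMap.smul_apply,
    La_apply_single, ContinuousLinearMap.proj_apply, Pi.single_apply, if_neg hij]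
  by_cases h : j ∈ s <;> simp [h] <;> ring

/-- For every `x ∈ ℝⁿ` and index `i`, `∂φ_i/∂x_i(x) > 0`, and for every
`j ≠ i`, `∂φ_i/∂x_j(x) < 0`. -/
theorem stmt2 (n k : ℕ) (hk : 2 ≤ k) (hkn : k < n) (d : Fin n → ℝ) (hd : ∀ i, 0 < d i)
    (x : Fin n → ℝ) (i : Fin n) :
    0 < fderiv ℝ (fun y => phi n k d y i) x (Pi.single i 1) ∧
    ∀ j : Fin n, j ≠ i → fderiv ℝ (fun y => phi n k d y i) x (Pi.single j 1) < 0 := by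
  classical
  set P := Finset.powersetCard (k - 1) (Finset.univ.erase i) with hP
  set S : (Fin n → ℝ) → ℝ := fun y =>
    ∑ s ∈ P, Real.exp (∑ j ∈ s, y j) / (1 + Real.exp ((∑ j ∈ s, y j) + y i)) with hSdef
  have hcard_erase : (Finset.univ.erase i).card = n - 1 := by
    rw [Finset.card_erase_of_mem (Finset.mem_univ i)]
    simp
  have hPne : P.Nonempty := by
    rw [hP, Finset.powersetCard_nonempty, hcard_erase]
    omega
  have htermpos : ∀ s ∈ P,
      0 < Real.exp (∑ j ∈ s, x j) / (1 + Real.exp ((∑ j ∈ s, x j) + x i)) := by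
    intro s _
    positivity
  have hSpos : 0 < S x := Finset.sum_pos htermpos hPne
  have hS : HasFDerivAt S (∑ s ∈ P, T n i x s) x :=
    HasFDerivAt.fun_sum fun s _ => hasFDerivAt_term n i x s
  have hphi : HasFDerivAt (fun y => phi n k d y i)
      (-((S x)⁻¹ • ∑ s ∈ P, T n i x s)) x := by
    have := (hS.log hSpos.ne').const_sub (Real.log (d i))
    simpa [phi, hSdef, hP] using this
  have hfd := hphi.fderiv
  rw [hfd]
  have hmem_sub : ∀ s ∈ P, s ⊆ Finset.univ.erase i := fun s hs =>
    (Finset.mem_powersetCard.mp hs).1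
  constructor
  · -- j = i case
    have hval : ∀ s ∈ P, T n i x s (Pi.single i 1) =
        -(Real.exp (∑ j ∈ s, x j) * Real.exp ((∑ j ∈ s, x j) + x i) *
          ((1 + Real.exp ((∑ j ∈ s, x j) + x i)) ^ 2)⁻¹) := by
      intro s hs
      have his : i ∉ s := fun h => (Finset.mem_erase.mp (hmem_sub s hs h)).1 rfl
      exact T_apply_single_self n i x s his
    have hsum_neg : (∑ s ∈ P, T n i x s) (Pi.single i 1) < 0 := by
      rw [ContinuousLinearMap.sum_apply]
      have h0 : ∑ s ∈ P, (0:ℝ) = 0 := Finset.sum_const_zero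
      calc ∑ s ∈ P, T n i x s (Pi.single i 1) < ∑ s ∈ P, (0:ℝ) := by
            apply Finset.sum_lt_sum_of_nonempty hPne
            intro s hs
            rw [hval s hs]
            have : 0 < Real.exp (∑ j ∈ s, x j) * Real.exp ((∑ j ∈ s, x j) + x i) *
                ((1 + Real.exp ((∑ j ∈ s, x j) + x i)) ^ 2)⁻¹ := by positivity
            linarith
        _ = 0 := h0
    simp only [ContinuousLinearMap.neg_apply, ContinuousLinearMap.smul_apply,
      smul_eq_mul]
    have := mul_pos (inv_pos.mpr hSpos) (neg_pos.mpr hsum_neg)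
    linarith
  · intro j hji
    have hij : i ≠ j := fun h => hji h.symm
    have hval : ∀ s ∈ P, T n i x s (Pi.single j 1) =
        if j ∈ s then
          Real.exp (∑ l ∈ s, x l) * ((1 + Real.exp ((∑ l ∈ s, x l) + x i))⁻¹ -
            Real.exp ((∑ l ∈ s, x l) + x i) *
              ((1 + Real.exp ((∑ l ∈ s, x l) + x i)) ^ 2)⁻¹)
        else 0 := fun s _ => T_apply_single_ne n i j x s hij
    have hkey : ∀ a : ℝ, 0 < (1 + Real.exp a)⁻¹ -
        Real.exp a * ((1 + Real.exp a) ^ 2)⁻¹ := by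
      intro a
      have h1 : (0:ℝ) < 1 + Real.exp a := by positivity
      have heq : (1 + Real.exp a)⁻¹ - Real.exp a * ((1 + Real.exp a) ^ 2)⁻¹
          = ((1 + Real.exp a) ^ 2)⁻¹ := by
        field_simp
        ring
      rw [heq]
      positivity
    have hnonneg : ∀ s ∈ P, 0 ≤ T n i x s (Pi.single j 1) := by
      intro s hs
      rw [hval s hs]
      split
      · exact le_of_lt (mul_pos (Real.exp_pos _) (hkey _))
      · exact le_refl 0
    have hjmem : j ∈ Finset.univ.erase i := Finset.mem_erase.mpr ⟨hji, Finset.mem_univ j⟩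
    have hcard2 : ((Finset.univ.erase i).erase j).card = n - 2 := by
      rw [Finset.card_erase_of_mem hjmem, hcard_erase]
      omega
    obtain ⟨t, hts, htcard⟩ :
        ∃ t ⊆ (Finset.univ.erase i).erase j, t.card = k - 2 :=
      Finset.exists_subset_card_eq (by omega : k - 2 ≤ ((Finset.univ.erase i).erase j).card)
    have hjt : j ∉ t := fun h => (Finset.mem_erase.mp (hts h)).1 rfl
    have hs0card : (insert j t).card = k - 1 := by
      rw [Finset.card_insert_of_notMem hjt, htcard]
      omega
    have hs0sub : insert j t ⊆ Finset.univ.erase i :=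
      Finset.insert_subset hjmem (hts.trans (Finset.erase_subset _ _))
    have hs0P : insert j t ∈ P := Finset.mem_powersetCard.mpr ⟨hs0sub, hs0card⟩
    have hs0pos : 0 < T n i x (insert j t) (Pi.single j 1) := by
      rw [hval _ hs0P, if_pos (Finset.mem_insert_self j t)]
      exact mul_pos (Real.exp_pos _) (hkey _)
    have hsum_pos : 0 < (∑ s ∈ P, T n i x s) (Pi.single j 1) := by
      rw [ContinuousLinearMap.sum_apply]
      exact Finset.sum_pos' hnonneg ⟨insert j t, hs0P, hs0pos⟩
    simp only [ContinuousLinearMap.neg_apply, ContinuousLinearMap.smul_apply,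
      smul_eq_mul]
    have := mul_pos (inv_pos.mpr hSpos) hsum_pos
    linarith
end

section
/- Let K ≥ 0 and x ∈ R^n with |x|_∞ ≤ K. Then for every index i and every (k−1)-element subset s of {1,…,n} \ {i}, the normalized quantity q_{is}(x) = r_{is}(x) / Σ_{s'} r_{is'}(x) (the sum over all (k−1)-element subsets s' of {1,…,n} \ {i}) satisfies e^{−2(k−1)K}/C(n−1, k−1) ≤ q_{is}(x) ≤ e^{2(k−1)K}/C(n−1, k−1), where C(n−1, k−1) is the binomial coefficient. -/
/-- `r_{is}(x) = e^{x̃_s}/(1 + e^{x̃_s + x_i})` where `x̃_s = ∑_{j ∈ s} x_j`. -/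
noncomputable def rq (n : ℕ) (x : Fin n → ℝ) (i : Fin n) (s : Finset (Fin n)) : ℝ :=
  Real.exp (∑ j ∈ s, x j) / (1 + Real.exp ((∑ j ∈ s, x j) + x i))

/-- `q_{is}(x) = r_{is}(x) / ∑_{s'} r_{is'}(x)`, the sum over all `(k−1)`-element
subsets `s'` of `{1,…,n} \ {i}`. -/
noncomputable def qq (n k : ℕ) (x : Fin n → ℝ) (i : Fin n) (s : Finset (Fin n)) : ℝ :=
  rq n x i s / ∑ s' ∈ Finset.powersetCard (k - 1) (Finset.univ.erase i), rq n x i s'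

lemma rq_eq (n : ℕ) (x : Fin n → ℝ) (i : Fin n) (s : Finset (Fin n)) :
    rq n x i s = (Real.exp (-(∑ j ∈ s, x j)) + Real.exp (x i))⁻¹ := by
  unfold rq
  have h1 : 1 + Real.exp ((∑ j ∈ s, x j) + x i)
      = Real.exp (∑ j ∈ s, x j) * (Real.exp (-(∑ j ∈ s, x j)) + Real.exp (x i)) := by
    rw [mul_add, ← Real.exp_add, ← Real.exp_add, add_neg_cancel, Real.exp_zero]
  rw [h1, div_mul_eq_div_div, div_self (Real.exp_pos _).ne', one_div]

lemma key (M c A B : ℝ) (hM : 0 ≤ M) (hA : |A| ≤ M) (hB : |B| ≤ M) :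
    (Real.exp (-B) + Real.exp c)⁻¹ ≤ Real.exp (2*M) * (Real.exp (-A) + Real.exp c)⁻¹ := by
  obtain ⟨hA1, hA2⟩ := abs_le.1 hA
  obtain ⟨hB1, hB2⟩ := abs_le.1 hB
  have hposA : 0 < Real.exp (-A) + Real.exp c := by positivity
  have hposB : 0 < Real.exp (-B) + Real.exp c := by positivity
  have h : Real.exp (-A) + Real.exp c ≤ Real.exp (2*M) * (Real.exp (-B) + Real.exp c) := by
    rw [mul_add, ← Real.exp_add]
    refine add_le_add (Real.exp_le_exp.2 (by linarith)) ?_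
    exact le_mul_of_one_le_left (Real.exp_pos c).le (Real.one_le_exp (by linarith))
  rw [← div_eq_mul_inv, le_div_iff₀ hposA, inv_mul_le_iff₀ hposB]
  linarith

/-- If `K ≥ 0` and `|x|_∞ ≤ K`, then for every index `i` and every
`(k−1)`-element subset `s` of `{1,…,n} \ {i}`,
`e^{−2(k−1)K}/C(n−1,k−1) ≤ q_{is}(x) ≤ e^{2(k−1)K}/C(n−1,k−1)`. -/
theorem stmt4 (n k : ℕ) (hk : 2 ≤ k) (hkn : k < n) (K : ℝ) (hK : 0 ≤ K)
    (x : Fin n → ℝ) (hx : ‖x‖ ≤ K) (i : Fin n) (s : Finset (Fin n))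
    (hs : s ∈ Finset.powersetCard (k - 1) (Finset.univ.erase i)) :
    Real.exp (-(2 * ((k : ℝ) - 1) * K)) / ((n - 1).choose (k - 1) : ℝ) ≤ qq n k x i s ∧
    qq n k x i s ≤ Real.exp (2 * ((k : ℝ) - 1) * K) / ((n - 1).choose (k - 1) : ℝ) := by
  set M : ℝ := ((k : ℝ) - 1) * K with hMdef
  have hk1 : (1:ℝ) ≤ (k:ℝ) := by exact_mod_cast Nat.one_le_of_lt hk
  have hM : 0 ≤ M := mul_nonneg (by linarith) hK
  set P := Finset.powersetCard (k - 1) (Finset.univ.erase i) with hP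
  have habs : ∀ s' ∈ P, |∑ j ∈ s', x j| ≤ M := by
    intro s' hs'
    obtain ⟨hsub, hcard⟩ := Finset.mem_powersetCard.1 hs'
    calc |∑ j ∈ s', x j| ≤ ∑ j ∈ s', |x j| := Finset.abs_sum_le_sum_abs _ _
      _ ≤ ∑ j ∈ s', K := Finset.sum_le_sum fun j _ => by
          calc |x j| = ‖x j‖ := (Real.norm_eq_abs _).symm
            _ ≤ ‖x‖ := norm_le_pi_norm x j
            _ ≤ K := hx
      _ = ((k - 1 : ℕ) : ℝ) * K := by rw [Finset.sum_const, hcard, nsmul_eq_mul]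
      _ = M := by rw [Nat.cast_sub (by omega), Nat.cast_one]
  have hrq_pos : ∀ s' : Finset (Fin n), 0 < rq n x i s' := by
    intro s'; rw [rq_eq]; positivity
  have hcardP : (P.card : ℝ) = ((n - 1).choose (k - 1) : ℝ) := by
    rw [hP, Finset.card_powersetCard, Finset.card_erase_of_mem (Finset.mem_univ i),
      Finset.card_univ, Fintype.card_fin]
  have hN : (0:ℝ) < ((n - 1).choose (k - 1) : ℝ) := by
    exact_mod_cast Nat.choose_pos (by omega)
  set S := ∑ s' ∈ P, rq n x i s' with hSdef
  have hSpos : 0 < S := Finset.sum_pos (fun s' _ => hrq_pos s') ⟨s, hs⟩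
  have hSe : Real.exp (2*M) * Real.exp (-(2*M)) = 1 := by
    rw [← Real.exp_add, add_neg_cancel, Real.exp_zero]
  have hupper : S ≤ ((n - 1).choose (k - 1) : ℝ) * (Real.exp (2*M) * rq n x i s) := by
    calc S ≤ ∑ _s' ∈ P, Real.exp (2*M) * rq n x i s := by
          refine Finset.sum_le_sum fun s' hs' => ?_
          rw [rq_eq, rq_eq]
          exact key M (x i) _ _ hM (habs s hs) (habs s' hs')
      _ = (P.card : ℝ) * (Real.exp (2*M) * rq n x i s) := by
          rw [Finset.sum_const, nsmul_eq_mul]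
      _ = _ := by rw [hcardP]
  have hlower : ((n - 1).choose (k - 1) : ℝ) * (Real.exp (-(2*M)) * rq n x i s) ≤ S := by
    calc ((n - 1).choose (k - 1) : ℝ) * (Real.exp (-(2*M)) * rq n x i s)
        = (P.card : ℝ) * (Real.exp (-(2*M)) * rq n x i s) := by rw [hcardP]
      _ = ∑ _s' ∈ P, Real.exp (-(2*M)) * rq n x i s := by
          rw [Finset.sum_const, nsmul_eq_mul]
      _ ≤ S := by
          refine Finset.sum_le_sum fun s' hs' => ?_
          have h := key M (x i) _ _ hM (habs s' hs') (habs s hs)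
          rw [← rq_eq, ← rq_eq] at h
          have := mul_le_mul_of_nonneg_left h (Real.exp_pos (-(2*M))).le
          calc Real.exp (-(2*M)) * rq n x i s
              ≤ Real.exp (-(2*M)) * (Real.exp (2*M) * rq n x i s') := this
            _ = rq n x i s' := by rw [← mul_assoc, mul_comm (Real.exp (-(2*M))), hSe, one_mul]
  have hrs := hrq_pos s
  have h2M : 2 * ((k:ℝ) - 1) * K = 2 * M := by rw [hMdef]; ring
  rw [qq, ← hP, ← hSdef]
  constructor
  · rw [h2M, div_le_div_iff₀ hN hSpos]
    nlinarith [hupper, Real.exp_pos (-(2*M)), Real.exp_pos (2*M)]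
  · rw [h2M, div_le_div_iff₀ hSpos hN]
    nlinarith [hlower, Real.exp_pos (-(2*M)), Real.exp_pos (2*M)]
end

section
/- Let K ≥ 0 and x ∈ R^n with |x|_∞ ≤ K. Then for every index i, the diagonal partial derivative satisfies ∂φ_i/∂x_i(x) ≥ (1/2)e^{−4(k−1)K}. -/
set_option maxHeartbeats 1000000


/-- If `K ≥ 0` and `|x|_∞ ≤ K`, then for every index `i`,
`∂φ_i/∂x_i(x) ≥ (1/2)e^{−4(k−1)K}`. -/
theorem stmt5 (n k : ℕ) (hk : 2 ≤ k) (hkn : k < n) (d : Fin n → ℝ) (hd : ∀ i, 0 < d i)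
    (K : ℝ) (hK : 0 ≤ K) (x : Fin n → ℝ) (hx : ‖x‖ ≤ K) (i : Fin n) :
    (1 / 2) * Real.exp (-(4 * ((k : ℝ) - 1) * K)) ≤
      fderiv ℝ (fun y => phi n k d y i) x (Pi.single i 1) := by
  classical
  set P := Finset.powersetCard (k - 1) (Finset.univ.erase i) with hPdef
  set u : Finset (Fin n) → ℝ := fun s => ∑ j ∈ s, x j with hu
  set D : Finset (Fin n) → ℝ := fun s => 1 + Real.exp (u s + x i) with hD
  have hDpos : ∀ s, 0 < D s := fun s => by positivity
  have hDne : ∀ s, D s ≠ 0 := fun s => (hDpos s).ne'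
  set S : ℝ := ∑ s ∈ P, Real.exp (u s) / D s with hS
  have hPne : P.Nonempty := by
    rw [hPdef, Finset.powersetCard_nonempty, Finset.card_erase_of_mem (Finset.mem_univ i),
      Finset.card_univ, Fintype.card_fin]
    omega
  have hSpos : 0 < S := Finset.sum_pos (fun s _ => by positivity) hPne
  set L0 : Finset (Fin n) → ((Fin n → ℝ) →L[ℝ] ℝ) := fun s =>
    ∑ j ∈ s, ContinuousLinearMap.proj j with hL0
  set pri : (Fin n → ℝ) →L[ℝ] ℝ := ContinuousLinearMap.proj i with hpri
  set M : Finset (Fin n) → ((Fin n → ℝ) →L[ℝ] ℝ) := fun s =>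
    Real.exp (u s) • (-(D s ^ 2)⁻¹ • (Real.exp (u s + x i) • (L0 s + pri))) +
      (D s)⁻¹ • (Real.exp (u s) • L0 s) with hM
  have hterm : ∀ s ∈ P, HasFDerivAt
      (fun y : Fin n → ℝ => Real.exp (∑ j ∈ s, y j) / (1 + Real.exp ((∑ j ∈ s, y j) + y i)))
      (M s) x := by
    intro s _
    have h0 : HasFDerivAt (fun y : Fin n → ℝ => ∑ j ∈ s, y j) (L0 s) x :=
      HasFDerivAt.fun_sum fun j _ => hasFDerivAt_apply j x
    have hnum : HasFDerivAt (fun y : Fin n → ℝ => Real.exp (∑ j ∈ s, y j))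
        (Real.exp (u s) • L0 s) x := h0.exp
    have hin : HasFDerivAt (fun y : Fin n → ℝ => (∑ j ∈ s, y j) + y i) (L0 s + pri) x :=
      h0.add (hasFDerivAt_apply i x)
    have hden : HasFDerivAt (fun y : Fin n → ℝ => 1 + Real.exp ((∑ j ∈ s, y j) + y i))
        (Real.exp (u s + x i) • (L0 s + pri)) x := hin.exp.const_add 1
    have hinv : HasFDerivAt
        (fun y : Fin n → ℝ => (1 + Real.exp ((∑ j ∈ s, y j) + y i))⁻¹)
        (-(D s ^ 2)⁻¹ • (Real.exp (u s + x i) • (L0 s + pri))) x :=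
      (hasDerivAt_inv (hDne s)).comp_hasFDerivAt x hden
    have := hnum.fun_mul hinv
    simpa [div_eq_mul_inv, hM] using this
  have hSum : HasFDerivAt
      (fun y : Fin n → ℝ => ∑ s ∈ P,
        Real.exp (∑ j ∈ s, y j) / (1 + Real.exp ((∑ j ∈ s, y j) + y i)))
      (∑ s ∈ P, M s) x := HasFDerivAt.fun_sum hterm
  have hphi : HasFDerivAt (fun y => phi n k d y i) (-(S⁻¹ • ∑ s ∈ P, M s)) x := by
    have := (hSum.log hSpos.ne').const_sub (Real.log (d i))
    simpa [phi, neg_smul] using this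
  rw [hphi.fderiv]
  have hL0e : ∀ s ∈ P, L0 s (Pi.single i 1) = 0 := by
    intro s hs
    have hi : i ∉ s := by
      rw [hPdef, Finset.mem_powersetCard] at hs
      exact fun h => (Finset.mem_erase.mp (hs.1 h)).1 rfl
    simp only [hL0, ContinuousLinearMap.sum_apply, ContinuousLinearMap.proj_apply]
    refine Finset.sum_eq_zero fun j hj => Pi.single_eq_of_ne (fun h : j = i => hi (h ▸ hj)) 1
  have hMe : ∀ s ∈ P, (M s) (Pi.single i 1)
      = -(Real.exp (u s) * Real.exp (u s + x i) / D s ^ 2) := by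
    intro s hs
    simp only [hM, ContinuousLinearMap.add_apply, ContinuousLinearMap.smul_apply,
      ContinuousLinearMap.neg_apply, smul_eq_mul, hpri, ContinuousLinearMap.proj_apply]
    rw [hL0e s hs, Pi.single_eq_same]
    field_simp
    ring
  have heval : (-(S⁻¹ • ∑ s ∈ P, M s)) (Pi.single i 1)
      = S⁻¹ * ∑ s ∈ P, Real.exp (u s) * Real.exp (u s + x i) / D s ^ 2 := by
    simp only [ContinuousLinearMap.neg_apply, ContinuousLinearMap.smul_apply,
      ContinuousLinearMap.sum_apply, smul_eq_mul]
    rw [Finset.sum_congr rfl hMe, Finset.sum_neg_distrib]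
    ring
  rw [heval]
  set c : ℝ := (1 / 2) * Real.exp (-(4 * ((k : ℝ) - 1) * K)) with hc
  have hxj : ∀ j, |x j| ≤ K := by
    intro j
    have := norm_le_pi_norm x j
    rw [Real.norm_eq_abs] at this
    linarith
  have hbound : ∀ s ∈ P, c * (Real.exp (u s) / D s)
      ≤ Real.exp (u s) * Real.exp (u s + x i) / D s ^ 2 := by
    intro s hs
    have hcard : s.card = k - 1 := by
      rw [hPdef, Finset.mem_powersetCard] at hs; exact hs.2
    have hus : |u s| ≤ ((k : ℝ) - 1) * K := by
      calc |u s| ≤ ∑ j ∈ s, |x j| := Finset.abs_sum_le_sum_abs _ _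
        _ ≤ ∑ j ∈ s, K := Finset.sum_le_sum fun j _ => hxj j
        _ = ((k : ℝ) - 1) * K := by
            rw [Finset.sum_const, hcard, nsmul_eq_mul]
            congr 1
            push_cast [Nat.cast_sub (by omega : 1 ≤ k)]
            ring
    have ht : |u s + x i| ≤ (k : ℝ) * K := by
      calc |u s + x i| ≤ |u s| + |x i| := abs_add_le _ _
        _ ≤ ((k : ℝ) - 1) * K + K := add_le_add hus (hxj i)
        _ = (k : ℝ) * K := by ring
    have h1 : Real.exp (-((k : ℝ) * K)) ≤ Real.exp (u s + x i) :=
      Real.exp_le_exp.mpr (neg_le_of_abs_le ht)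
    have h2 : D s ≤ 2 * Real.exp ((k : ℝ) * K) := by
      have hle : Real.exp (u s + x i) ≤ Real.exp ((k : ℝ) * K) :=
        Real.exp_le_exp.mpr (le_of_abs_le ht)
      have h1' : (1 : ℝ) ≤ Real.exp ((k : ℝ) * K) := Real.one_le_exp (by positivity)
      show (1 : ℝ) + Real.exp (u s + x i) ≤ 2 * Real.exp ((k : ℝ) * K)
      linarith
    have hcb : c ≤ Real.exp (u s + x i) / D s := by
      have hk2 : (2 : ℝ) ≤ (k : ℝ) := by exact_mod_cast hk
      calc c ≤ (1 / 2) * Real.exp (-(2 * ((k : ℝ) * K))) := by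
            rw [hc]
            have hle : (-(4 * ((k : ℝ) - 1) * K)) ≤ (-(2 * ((k : ℝ) * K))) := by nlinarith
            have := Real.exp_le_exp.mpr hle
            linarith
        _ = Real.exp (-((k : ℝ) * K)) / (2 * Real.exp ((k : ℝ) * K)) := by
            rw [show (-(2 * ((k : ℝ) * K))) = (-((k : ℝ) * K)) + (-((k : ℝ) * K)) by ring,
              Real.exp_add, Real.exp_neg]
            field_simp
        _ ≤ Real.exp (u s + x i) / D s :=
            div_le_div₀ (Real.exp_pos _).le h1 (hDpos s) h2
    have hrw : Real.exp (u s) * Real.exp (u s + x i) / D s ^ 2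
        = (Real.exp (u s) / D s) * (Real.exp (u s + x i) / D s) := by
      field_simp
    rw [hrw, mul_comm c _]
    exact mul_le_mul_of_nonneg_left hcb (by positivity)
  have hsum := Finset.sum_le_sum hbound
  rw [← Finset.mul_sum, ← hS] at hsum
  rw [inv_mul_eq_div, le_div_iff₀ hSpos]
  exact hsum
end

section
/- Let K ≥ 0 and x ∈ R^n with |x|_∞ ≤ K. Then for all indices i ≠ j, the off-diagonal partial derivative satisfies ∂φ_i/∂x_j(x) ≤ −((k−1)/(2(n−1)))·e^{−4(k−1)K}. -/
open Finset Real


private lemma aux_mid (a b Pc Pjc E T q : ℝ) (hb : 0 < b) (hE : 0 < E) (hT : 1 ≤ T)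
    (hq : 0 < q) (hkey : b * Pjc = a * Pc) (hPc : 0 < Pc) (ha : 0 < a)
    (hcore : q * (1 + T) ≤ 2) :
    a / (2 * b) * q * (Pc * (E * (T / (1 + T)))) ≤ Pjc * (E * (T / (1 + T) ^ 2)) := by
  have h1T : (0:ℝ) < 1 + T := by linarith
  have hTp : (0:ℝ) < T := by linarith
  have hPjc : Pjc = a * Pc / b := by field_simp; linarith [hkey]
  rw [hPjc]
  have e1 : a / (2 * b) * q * (Pc * (E * (T / (1 + T))))
      = a * Pc * E * T * q / (2 * b * (1 + T)) := by
    field_simp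
  have e2 : a * Pc / b * (E * (T / (1 + T) ^ 2)) = a * Pc * E * T / (b * (1 + T) ^ 2) := by
    field_simp
  rw [e1, e2, div_le_div_iff₀ (by positivity) (by positivity)]
  have hfac : (0:ℝ) ≤ a * Pc * E * T * b * (1 + T) := by positivity
  nlinarith [mul_le_mul_of_nonneg_left hcore hfac]

set_option maxHeartbeats 1000000 in
/-- If `K ≥ 0` and `|x|_∞ ≤ K`, then for all indices `i ≠ j`,
`∂φ_i/∂x_j(x) ≤ −((k−1)/(2(n−1)))·e^{−4(k−1)K}`. -/
theorem stmt6 (n k : ℕ) (hk : 2 ≤ k) (hkn : k < n) (d : Fin n → ℝ) (hd : ∀ i, 0 < d i)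
    (K : ℝ) (hK : 0 ≤ K) (x : Fin n → ℝ) (hx : ‖x‖ ≤ K) (i j : Fin n) (hij : i ≠ j) :
    fderiv ℝ (fun y => phi n k d y i) x (Pi.single j 1) ≤
      -(((k : ℝ) - 1) / (2 * ((n : ℝ) - 1))) * Real.exp (-(4 * ((k : ℝ) - 1) * K)) := by
  classical
  set P : Finset (Finset (Fin n)) := Finset.powersetCard (k - 1) (Finset.univ.erase i) with hP
  set w : Fin n → ℝ := Pi.single j 1 with hw
  -- linear maps
  set A : Finset (Fin n) → ((Fin n → ℝ) →L[ℝ] ℝ) :=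
    fun s => ∑ l ∈ s, ContinuousLinearMap.proj l with hAdef
  set B : Finset (Fin n) → ((Fin n → ℝ) →L[ℝ] ℝ) :=
    fun s => A s + ContinuousLinearMap.proj i with hBdef
  have hA : ∀ s (y : Fin n → ℝ), A s y = ∑ l ∈ s, y l := by
    intro s y; simp [hAdef]
  have hB : ∀ s (y : Fin n → ℝ), B s y = (∑ l ∈ s, y l) + y i := by
    intro s y; simp [hBdef, hA]
  set f : (Fin n → ℝ) → ℝ :=
    fun y => ∑ s ∈ P, Real.exp (∑ l ∈ s, y l) / (1 + Real.exp ((∑ l ∈ s, y l) + y i)) with hf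
  set D : Finset (Fin n) → ((Fin n → ℝ) →L[ℝ] ℝ) := fun s =>
    Real.exp (∑ l ∈ s, x l) • ((-((1 + Real.exp ((∑ l ∈ s, x l) + x i)) ^ 2)⁻¹) •
        (Real.exp ((∑ l ∈ s, x l) + x i) • B s)) +
      (1 + Real.exp ((∑ l ∈ s, x l) + x i))⁻¹ • (Real.exp (∑ l ∈ s, x l) • A s) with hD
  have hterm : ∀ s ∈ P, HasFDerivAt
      (fun y : Fin n → ℝ => Real.exp (∑ l ∈ s, y l) / (1 + Real.exp ((∑ l ∈ s, y l) + y i)))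
      (D s) x := by
    intro s _
    have ha : HasFDerivAt (fun y : Fin n → ℝ => ∑ l ∈ s, y l) (A s) x := by
      simpa only [show ⇑(A s) = fun y : Fin n → ℝ => ∑ l ∈ s, y l from funext (hA s)]
        using (A s).hasFDerivAt (x := x)
    have hb : HasFDerivAt (fun y : Fin n → ℝ => (∑ l ∈ s, y l) + y i) (B s) x := by
      simpa only [show ⇑(B s) = fun y : Fin n → ℝ => (∑ l ∈ s, y l) + y i from funext (hB s)]
        using (B s).hasFDerivAt (x := x)
    have hu : HasFDerivAt (fun y : Fin n → ℝ => Real.exp (∑ l ∈ s, y l))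
        (Real.exp (∑ l ∈ s, x l) • A s) x := ha.exp
    have hv : HasFDerivAt (fun y : Fin n → ℝ => 1 + Real.exp ((∑ l ∈ s, y l) + y i))
        (Real.exp ((∑ l ∈ s, x l) + x i) • B s) x := (hb.exp).const_add 1
    have hinv : HasFDerivAt (fun y : Fin n → ℝ => (1 + Real.exp ((∑ l ∈ s, y l) + y i))⁻¹)
        ((-((1 + Real.exp ((∑ l ∈ s, x l) + x i)) ^ 2)⁻¹) •
          (Real.exp ((∑ l ∈ s, x l) + x i) • B s)) x := by
      have h0 : (1 : ℝ) + Real.exp ((∑ l ∈ s, x l) + x i) ≠ 0 := by positivity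
      exact (hasDerivAt_inv h0).comp_hasFDerivAt x hv
    have := hu.mul hinv
    have heq : (fun y : Fin n → ℝ =>
        Real.exp (∑ l ∈ s, y l) / (1 + Real.exp ((∑ l ∈ s, y l) + y i)))
        = fun y : Fin n → ℝ =>
          Real.exp (∑ l ∈ s, y l) * (1 + Real.exp ((∑ l ∈ s, y l) + y i))⁻¹ := by
      funext y; rw [div_eq_mul_inv]
    rw [heq, hD]
    exact this
  have hfd : HasFDerivAt f (∑ s ∈ P, D s) x := HasFDerivAt.fun_sum hterm
  have hfxpos : 0 < f x := by
    have hne : P.Nonempty := by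
      rw [hP]
      refine Finset.powersetCard_nonempty.2 ?_
      rw [Finset.card_erase_of_mem (Finset.mem_univ i), Finset.card_univ, Fintype.card_fin]
      omega
    rw [hf]
    refine Finset.sum_pos (fun s _ => by positivity) hne
  have hphi : HasFDerivAt (fun y => phi n k d y i)
      ((0 : (Fin n → ℝ) →L[ℝ] ℝ) - (f x)⁻¹ • (∑ s ∈ P, D s)) x := by
    have hfun : (fun y => phi n k d y i) = fun y => Real.log (d i) - Real.log (f y) := by
      funext y; simp only [phi, hf, hP]
    rw [hfun]
    exact (hasFDerivAt_const _ _).sub (hfd.log (ne_of_gt hfxpos))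
  have hDw : ∀ s ∈ P, D s w =
      if j ∈ s then Real.exp (∑ l ∈ s, x l) / (1 + Real.exp ((∑ l ∈ s, x l) + x i)) ^ 2
      else 0 := by
    intro s _
    have hAw : A s w = if j ∈ s then (1:ℝ) else 0 := by
      rw [hA, hw]
      exact Finset.sum_pi_single' j 1 s
    have hiw : w i = 0 := by
      rw [hw]; exact Pi.single_eq_of_ne hij 1
    have hBw : B s w = if j ∈ s then (1:ℝ) else 0 := by
      rw [hB]
      rw [hw] at hiw ⊢
      rw [Finset.sum_pi_single' j 1 s, hiw, add_zero]
    have hvne : (1 + Real.exp ((∑ l ∈ s, x l) + x i)) ≠ 0 := by positivity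
    rw [hD]
    simp only [ContinuousLinearMap.add_apply, ContinuousLinearMap.smul_apply, hAw, hBw,
      smul_eq_mul]
    by_cases hjs : j ∈ s
    · simp only [hjs, if_true]
      field_simp
      ring
    · simp [hjs]
  have hfder : fderiv ℝ (fun y => phi n k d y i) x w
      = -((f x)⁻¹ * ∑ s ∈ P, (if j ∈ s then
          Real.exp (∑ l ∈ s, x l) / (1 + Real.exp ((∑ l ∈ s, x l) + x i)) ^ 2 else 0)) := by
    rw [hphi.fderiv]
    simp [ContinuousLinearMap.sum_apply, Finset.sum_congr rfl hDw]
  -- ## Inequality part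
  have hxl : ∀ l, |x l| ≤ K := by
    intro l
    have := norm_le_pi_norm x l
    rw [Real.norm_eq_abs] at this
    exact this.trans hx
  have hkR : (2:ℝ) ≤ (k:ℝ) := by exact_mod_cast hk
  have hnR : (k:ℝ) < (n:ℝ) := by exact_mod_cast hkn
  have hk1 : (0:ℝ) < (k:ℝ) - 1 := by linarith
  have hn1 : (0:ℝ) < (n:ℝ) - 1 := by linarith
  have hsum_abs : ∀ s ∈ P, |∑ l ∈ s, x l| ≤ ((k:ℝ) - 1) * K := by
    intro s hs
    have hcard : s.card = k - 1 := (Finset.mem_powersetCard.1 (hP ▸ hs)).2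
    have hcastc : ((s.card : ℕ) : ℝ) = (k:ℝ) - 1 := by
      rw [hcard, Nat.cast_sub (by omega : 1 ≤ k)]; norm_num
    calc |∑ l ∈ s, x l| ≤ ∑ l ∈ s, |x l| := Finset.abs_sum_le_sum_abs _ _
      _ ≤ ∑ l ∈ s, K := Finset.sum_le_sum fun l _ => hxl l
      _ = (s.card : ℝ) * K := by rw [Finset.sum_const, nsmul_eq_mul]
      _ = ((k:ℝ) - 1) * K := by rw [hcastc]
  set T : ℝ := Real.exp ((k:ℝ) * K) with hTdef
  have hT1 : (1:ℝ) ≤ T := Real.one_le_exp (by positivity)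
  have hTpos : (0:ℝ) < T := by linarith
  have h1T : (0:ℝ) < 1 + T := by linarith
  set E : ℝ := Real.exp (-(x i)) with hEdef
  have hEpos : 0 < E := Real.exp_pos _
  have hbnd : ∀ s ∈ P, T⁻¹ ≤ Real.exp ((∑ l ∈ s, x l) + x i) ∧
      Real.exp ((∑ l ∈ s, x l) + x i) ≤ T := by
    intro s hs
    have h1 := hsum_abs s hs
    have h2 := hxl i
    rw [abs_le] at h1 h2
    have hkk : (k:ℝ) * K = ((k:ℝ) - 1) * K + K := by ring
    constructor
    · rw [hTdef, ← Real.exp_neg]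
      exact Real.exp_le_exp.2 (by linarith [h1.1, h2.1])
    · exact Real.exp_le_exp.2 (by linarith [h1.2, h2.2])
  have hsplit : ∀ s : Finset (Fin n),
      Real.exp (∑ l ∈ s, x l) = E * Real.exp ((∑ l ∈ s, x l) + x i) := by
    intro s
    rw [hEdef, ← Real.exp_add]
    ring_nf
  have hub : ∀ s ∈ P,
      Real.exp (∑ l ∈ s, x l) / (1 + Real.exp ((∑ l ∈ s, x l) + x i)) ≤ E * (T / (1 + T)) := by
    intro s hs
    set t := Real.exp ((∑ l ∈ s, x l) + x i) with htdef
    have htpos : 0 < t := Real.exp_pos _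
    have h1t : (0:ℝ) < 1 + t := by linarith
    have htT : t ≤ T := (hbnd s hs).2
    rw [hsplit s, mul_div_assoc]
    refine mul_le_mul_of_nonneg_left ?_ hEpos.le
    rw [div_le_div_iff₀ h1t h1T]
    nlinarith
  have hlb : ∀ s ∈ P, E * (T / (1 + T) ^ 2) ≤
      Real.exp (∑ l ∈ s, x l) / (1 + Real.exp ((∑ l ∈ s, x l) + x i)) ^ 2 := by
    intro s hs
    set t := Real.exp ((∑ l ∈ s, x l) + x i) with htdef
    have htpos : 0 < t := Real.exp_pos _
    have h1t : (0:ℝ) < 1 + t := by linarith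
    have htT : t ≤ T := (hbnd s hs).2
    have htT' : T⁻¹ ≤ t := (hbnd s hs).1
    have htT1 : 1 ≤ t * T := by
      have := mul_le_mul_of_nonneg_right htT' hTpos.le
      rwa [inv_mul_cancel₀ hTpos.ne'] at this
    rw [hsplit s, mul_div_assoc]
    refine mul_le_mul_of_nonneg_left ?_ hEpos.le
    rw [div_le_div_iff₀ (by positivity) (by positivity)]
    nlinarith [mul_nonneg (sub_nonneg.2 htT) (sub_nonneg.2 htT1)]
  -- sum bounds
  have hfub : f x ≤ (P.card : ℝ) * (E * (T / (1 + T))) := by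
    rw [hf]
    calc (∑ s ∈ P, Real.exp (∑ l ∈ s, x l) / (1 + Real.exp ((∑ l ∈ s, x l) + x i)))
        ≤ ∑ s ∈ P, E * (T / (1 + T)) := Finset.sum_le_sum hub
      _ = (P.card : ℝ) * (E * (T / (1 + T))) := by rw [Finset.sum_const, nsmul_eq_mul]
  set Pj : Finset (Finset (Fin n)) := P.filter (fun s => j ∈ s) with hPjdef
  have hNlb : (Pj.card : ℝ) * (E * (T / (1 + T) ^ 2)) ≤
      ∑ s ∈ P, (if j ∈ s then
        Real.exp (∑ l ∈ s, x l) / (1 + Real.exp ((∑ l ∈ s, x l) + x i)) ^ 2 else 0) := by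
    rw [← Finset.sum_filter]
    calc (Pj.card : ℝ) * (E * (T / (1 + T) ^ 2))
        = ∑ _s ∈ Pj, E * (T / (1 + T) ^ 2) := by rw [Finset.sum_const, nsmul_eq_mul]
      _ ≤ ∑ s ∈ Pj, Real.exp (∑ l ∈ s, x l) / (1 + Real.exp ((∑ l ∈ s, x l) + x i)) ^ 2 :=
          Finset.sum_le_sum fun s hs => hlb s (Finset.mem_filter.1 hs).1
  -- cardinalities
  have hcP : P.card = (n - 1).choose (k - 1) := by
    rw [hP, Finset.card_powersetCard, Finset.card_erase_of_mem (Finset.mem_univ i),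
      Finset.card_univ, Fintype.card_fin]
  have hcPj : Pj.card = (n - 2).choose (k - 2) := by
    have hjt : j ∈ Finset.univ.erase i := Finset.mem_erase.2 ⟨hij.symm, Finset.mem_univ j⟩
    have : Pj.card = (Finset.powersetCard (k - 2) ((Finset.univ.erase i).erase j)).card := by
      refine Finset.card_bij' (fun s _ => s.erase j) (fun r _ => insert j r) ?_ ?_ ?_ ?_
      · intro s hs
        rw [hPjdef, Finset.mem_filter, hP, Finset.mem_powersetCard] at hs
        obtain ⟨⟨hsub, hcard⟩, hjs⟩ := hs
        rw [Finset.mem_powersetCard]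
        refine ⟨Finset.erase_subset_erase j hsub, ?_⟩
        rw [Finset.card_erase_of_mem hjs, hcard]
        omega
      · intro r hr
        rw [Finset.mem_powersetCard] at hr
        obtain ⟨hsub, hcard⟩ := hr
        have hjr : j ∉ r := fun h => (Finset.mem_erase.1 (hsub h)).1 rfl
        rw [hPjdef, Finset.mem_filter, hP, Finset.mem_powersetCard]
        refine ⟨⟨?_, ?_⟩, Finset.mem_insert_self j r⟩
        · intro a ha
          rcases Finset.mem_insert.1 ha with h | h
          · exact h ▸ hjt
          · exact (Finset.erase_subset _ _) (hsub h)
        · rw [Finset.card_insert_of_notMem hjr, hcard]; omega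
      · intro s hs
        rw [hPjdef, Finset.mem_filter] at hs
        exact Finset.insert_erase hs.2
      · intro r hr
        rw [Finset.mem_powersetCard] at hr
        have hjr : j ∉ r := fun h => (Finset.mem_erase.1 (hr.1 h)).1 rfl
        exact Finset.erase_insert hjr
    rw [this, Finset.card_powersetCard, Finset.card_erase_of_mem hjt,
      Finset.card_erase_of_mem (Finset.mem_univ i), Finset.card_univ, Fintype.card_fin]
    have hnn : n - 1 - 1 = n - 2 := by omega
    rw [hnn]
  have hPcpos : 0 < ((P.card : ℕ) : ℝ) := by
    rw [hcP]
    exact_mod_cast Nat.choose_pos (by omega : k - 1 ≤ n - 1)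
  have keyR : ((n:ℝ) - 1) * (Pj.card : ℝ) = ((k:ℝ) - 1) * (P.card : ℝ) := by
    have key := Nat.add_one_mul_choose_eq (n - 2) (k - 2)
    have h1 : n - 2 + 1 = n - 1 := by omega
    have h2 : k - 2 + 1 = k - 1 := by omega
    rw [h1, h2] at key
    rw [hcP, hcPj]
    have hn' : ((n - 1 : ℕ) : ℝ) = (n:ℝ) - 1 := by
      rw [Nat.cast_sub (by omega : 1 ≤ n)]; norm_num
    have hk' : ((k - 1 : ℕ) : ℝ) = (k:ℝ) - 1 := by
      rw [Nat.cast_sub (by omega : 1 ≤ k)]; norm_num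
    rw [← hn', ← hk', ← Nat.cast_mul, ← Nat.cast_mul, key, Nat.mul_comm]
  -- core exponential inequality
  have hcore : Real.exp (-(4 * ((k:ℝ) - 1) * K)) * (1 + T) ≤ 2 := by
    have h1 : T ≤ Real.exp (4 * ((k:ℝ) - 1) * K) := by
      rw [hTdef]
      exact Real.exp_le_exp.2 (mul_le_mul_of_nonneg_right (by linarith) hK)
    have h2 : (1:ℝ) ≤ Real.exp (4 * ((k:ℝ) - 1) * K) :=
      Real.one_le_exp (mul_nonneg (by linarith) hK)
    rw [Real.exp_neg, inv_mul_le_iff₀ (Real.exp_pos _)]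
    linarith
  -- putting it together
  set c : ℝ := ((k:ℝ) - 1) / (2 * ((n:ℝ) - 1)) * Real.exp (-(4 * ((k:ℝ) - 1) * K)) with hc
  have hcpos : 0 < c := by
    rw [hc]
    exact mul_pos (div_pos hk1 (by linarith)) (Real.exp_pos _)
  have hmid : c * ((P.card : ℝ) * (E * (T / (1 + T)))) ≤
      (Pj.card : ℝ) * (E * (T / (1 + T) ^ 2)) := by
    rw [hc]
    exact aux_mid ((k:ℝ) - 1) ((n:ℝ) - 1) (P.card : ℝ) (Pj.card : ℝ) E T
      (Real.exp (-(4 * ((k:ℝ) - 1) * K))) hn1 hEpos hT1 (Real.exp_pos _) keyR hPcpos hk1 hcore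
  have hmain : c * f x ≤ ∑ s ∈ P, (if j ∈ s then
      Real.exp (∑ l ∈ s, x l) / (1 + Real.exp ((∑ l ∈ s, x l) + x i)) ^ 2 else 0) := by
    calc c * f x ≤ c * ((P.card : ℝ) * (E * (T / (1 + T)))) :=
          mul_le_mul_of_nonneg_left hfub hcpos.le
      _ ≤ (Pj.card : ℝ) * (E * (T / (1 + T) ^ 2)) := hmid
      _ ≤ _ := hNlb
  rw [hfder]
  have hfinal : c ≤ (f x)⁻¹ * ∑ s ∈ P, (if j ∈ s then
      Real.exp (∑ l ∈ s, x l) / (1 + Real.exp ((∑ l ∈ s, x l) + x i)) ^ 2 else 0) := by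
    rw [inv_mul_eq_div, le_div_iff₀ hfxpos]
    exact hmain
  have : -(((k : ℝ) - 1) / (2 * ((n : ℝ) - 1))) * Real.exp (-(4 * ((k : ℝ) - 1) * K)) = -c := by
    rw [hc]; ring
  rw [this]
  exact neg_le_neg hfinal
end
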